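/- Let P₀,…,P_k be rank-1 projectors built from a holomorphic nonvanishing f via fⱼ = P₊^j f (all assumed nonvanishing, j ≤ k), with Pⱼ = (fⱼ⊗fⱼ†)/(fⱼ†fⱼ). Assume ∂(∑_{j=0}^{k−2} Pⱼ) = (f_{k−1} ⊗ f_{k−2}†)/(|f_{k−2}|²). Then ∂(∑_{j=0}^{k−1} Pⱼ) = (f_k ⊗ f_{k−1}†)/(|f_{k−1}|²). -/

import Mathlib

open Matrix Complex BigOperators

/-- Wirtinger derivative ∂ of a scalar function. -/
noncomputable def wd (g : ℂ → ℂ) (z : ℂ) : ℂ :=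
  (fderiv ℝ g z 1 - Complex.I * fderiv ℝ g z Complex.I) / 2

/-- Wirtinger derivative ∂̄ of a scalar function. -/
noncomputable def wdbar (g : ℂ → ℂ) (z : ℂ) : ℂ :=
  (fderiv ℝ g z 1 + Complex.I * fderiv ℝ g z Complex.I) / 2

/-- Componentwise ∂ of a vector-valued function. -/
noncomputable def wdv {N : ℕ} (f : ℂ → Fin N → ℂ) (z : ℂ) : Fin N → ℂ :=
  fun i => wd (fun w => f w i) z

/-- Componentwise ∂̄ of a vector-valued function. -/
noncomputable def wdbarv {N : ℕ} (f : ℂ → Fin N → ℂ) (z : ℂ) : Fin N → ℂ :=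
  fun i => wdbar (fun w => f w i) z

/-- Entrywise ∂ of a matrix-valued function. -/
noncomputable def wdm {N : ℕ} (P : ℂ → Matrix (Fin N) (Fin N) ℂ) (z : ℂ) :
    Matrix (Fin N) (Fin N) ℂ :=
  Matrix.of fun i j => wd (fun w => P w i j) z

/-- Entrywise ∂̄ of a matrix-valued function. -/
noncomputable def wdbarm {N : ℕ} (P : ℂ → Matrix (Fin N) (Fin N) ℂ) (z : ℂ) :
    Matrix (Fin N) (Fin N) ℂ :=
  Matrix.of fun i j => wdbar (fun w => P w i j) z

/-- The rank-1 projector P = (f ⊗ f†)/(f† f). -/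
noncomputable def proj {N : ℕ} (f : Fin N → ℂ) : Matrix (Fin N) (Fin N) ℂ :=
  (star f ⬝ᵥ f)⁻¹ • Matrix.vecMulVec f (star f)

/-- P₊(f, g) = g − f (f† g)/(f† f). -/
noncomputable def Pplus {N : ℕ} (f g : Fin N → ℂ) : Fin N → ℂ :=
  g - ((star f ⬝ᵥ g) / (star f ⬝ᵥ f)) • f

/-- fⱼ = P₊ʲ f, built from a map f : ℂ → ℂᴺ using the Wirtinger ∂. -/
noncomputable def Fseq {N : ℕ} (f : ℂ → Fin N → ℂ) : ℕ → ℂ → Fin N → ℂ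
  | 0 => f
  | (j + 1) => fun z => Pplus (Fseq f j z) (wdv (Fseq f j) z)

abbrev CS (g : ℂ → ℂ) : Prop := ContDiff ℝ (⊤ : ℕ∞) g

theorem two_le_coe_top : (2 : WithTop ℕ∞) ≤ ((⊤ : ℕ∞) : WithTop ℕ∞) := by
  rw [show ((2:WithTop ℕ∞)) = (((2:ℕ∞)):WithTop ℕ∞) by rfl]
  exact_mod_cast le_top

theorem one_le_coe_top : (1 : WithTop ℕ∞) ≤ ((⊤ : ℕ∞) : WithTop ℕ∞) := by
  rw [show ((1:WithTop ℕ∞)) = (((1:ℕ∞)):WithTop ℕ∞) by rfl]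
  exact_mod_cast le_top

theorem CS.diffAt {g : ℂ → ℂ} (hg : CS g) {z : ℂ} : DifferentiableAt ℝ g z :=
  (hg.differentiable (zero_lt_one.trans_le one_le_coe_top).ne') z

theorem ContDiff.diffAt {g : ℂ → ℂ} (hg : ContDiff ℝ ((⊤:ℕ∞) : WithTop ℕ∞) g) {z : ℂ} :
    DifferentiableAt ℝ g z :=
  (hg.differentiable (zero_lt_one.trans_le one_le_coe_top).ne') z

section scalar
variable {g h : ℂ → ℂ} {z : ℂ}

theorem wd_add (hg : DifferentiableAt ℝ g z) (hh : DifferentiableAt ℝ h z) :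
    wd (fun w => g w + h w) z = wd g z + wd h z := by
  simp only [wd, fderiv_fun_add hg hh]
  simp [ContinuousLinearMap.add_apply]; ring

theorem wdbar_add (hg : DifferentiableAt ℝ g z) (hh : DifferentiableAt ℝ h z) :
    wdbar (fun w => g w + h w) z = wdbar g z + wdbar h z := by
  simp only [wdbar, fderiv_fun_add hg hh]
  simp [ContinuousLinearMap.add_apply]; ring

theorem wd_const (a : ℂ) : wd (fun _ => a) z = 0 := by
  simp [wd, fderiv_const]

theorem wdbar_const (a : ℂ) : wdbar (fun _ => a) z = 0 := by
  simp [wdbar, fderiv_const]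

theorem wd_neg : wd (fun w => -(g w)) z = - wd g z := by
  simp only [wd, fderiv_neg]
  simp [ContinuousLinearMap.neg_apply]; ring

theorem wdbar_neg : wdbar (fun w => -(g w)) z = - wdbar g z := by
  simp only [wdbar, fderiv_neg]
  simp [ContinuousLinearMap.neg_apply]; ring

theorem wd_sub (hg : DifferentiableAt ℝ g z) (hh : DifferentiableAt ℝ h z) :
    wd (fun w => g w - h w) z = wd g z - wd h z := by
  have : (fun w => g w - h w) = (fun w => g w + -(h w)) := by funext w; ring
  rw [this, wd_add hg hh.fun_neg, show (fun w => -(h w)) = fun w => -(h w) from rfl, wd_neg]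
  ring

theorem wdbar_sub (hg : DifferentiableAt ℝ g z) (hh : DifferentiableAt ℝ h z) :
    wdbar (fun w => g w - h w) z = wdbar g z - wdbar h z := by
  have : (fun w => g w - h w) = (fun w => g w + -(h w)) := by funext w; ring
  rw [this, wdbar_add hg hh.fun_neg, wdbar_neg]
  ring

theorem wd_mul (hg : DifferentiableAt ℝ g z) (hh : DifferentiableAt ℝ h z) :
    wd (fun w => g w * h w) z = wd g z * h z + g z * wd h z := by
  simp only [wd, fderiv_fun_mul hg hh]
  simp [ContinuousLinearMap.add_apply, ContinuousLinearMap.smul_apply, smul_eq_mul]; ring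

theorem wdbar_mul (hg : DifferentiableAt ℝ g z) (hh : DifferentiableAt ℝ h z) :
    wdbar (fun w => g w * h w) z = wdbar g z * h z + g z * wdbar h z := by
  simp only [wdbar, fderiv_fun_mul hg hh]
  simp [ContinuousLinearMap.add_apply, ContinuousLinearMap.smul_apply, smul_eq_mul]; ring

theorem wd_conj : wd (fun w => (starRingEnd ℂ) (g w)) z = (starRingEnd ℂ) (wdbar g z) := by
  by_cases hg : DifferentiableAt ℝ g z
  · have h1 : fderiv ℝ (fun w => (starRingEnd ℂ) (g w)) z
        = (Complex.conjCLE.toContinuousLinearMap).comp (fderiv ℝ g z) :=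
      (Complex.conjCLE.toContinuousLinearMap.hasFDerivAt.comp z hg.hasFDerivAt).fderiv
    simp only [wd, wdbar, h1, ContinuousLinearMap.comp_apply]
    simp [Complex.conjCLE_apply, map_add, map_div₀, _root_.map_mul, map_ofNat]
    ring
  · have hg2 : ¬ DifferentiableAt ℝ (fun w => (starRingEnd ℂ) (g w)) z := by
      intro h
      apply hg
      have : g = fun w => (starRingEnd ℂ) ((starRingEnd ℂ) (g w)) := by funext w; simp
      rw [this]
      exact Complex.conjCLE.toContinuousLinearMap.differentiableAt.comp z h
    simp [wd, wdbar, fderiv_zero_of_not_differentiableAt hg,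
      fderiv_zero_of_not_differentiableAt hg2]

theorem wdbar_conj : wdbar (fun w => (starRingEnd ℂ) (g w)) z = (starRingEnd ℂ) (wd g z) := by
  have h := wd_conj (g := fun w => (starRingEnd ℂ) (g w)) (z := z)
  have e : (fun w => (starRingEnd ℂ) ((starRingEnd ℂ) (g w))) = g := by funext w; simp
  rw [e] at h
  have := congrArg (starRingEnd ℂ) h
  simp at this
  rw [← this]

theorem wd_sum {ι : Type*} (s : Finset ι) (F : ι → ℂ → ℂ)
    (hF : ∀ i ∈ s, DifferentiableAt ℝ (F i) z) :
    wd (fun w => ∑ i ∈ s, F i w) z = ∑ i ∈ s, wd (F i) z := by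
  classical
  induction s using Finset.induction with
  | empty => simp [wd_const]
  | insert _ _ hnotmem ih =>
    rename_i a s'
    rw [Finset.sum_insert hnotmem]
    have e : (fun w => ∑ i ∈ insert a s', F i w) = fun w => F a w + ∑ i ∈ s', F i w := by
      funext w; rw [Finset.sum_insert hnotmem]
    rw [e, wd_add (hF a (Finset.mem_insert_self a s'))
      (DifferentiableAt.fun_sum fun i hi => hF i (Finset.mem_insert_of_mem hi)),
      ih fun i hi => hF i (Finset.mem_insert_of_mem hi)]

theorem wdbar_sum {ι : Type*} (s : Finset ι) (F : ι → ℂ → ℂ)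
    (hF : ∀ i ∈ s, DifferentiableAt ℝ (F i) z) :
    wdbar (fun w => ∑ i ∈ s, F i w) z = ∑ i ∈ s, wdbar (F i) z := by
  classical
  induction s using Finset.induction with
  | empty => simp [wdbar_const]
  | insert _ _ hnotmem ih =>
    rename_i a s'
    rw [Finset.sum_insert hnotmem]
    have e : (fun w => ∑ i ∈ insert a s', F i w) = fun w => F a w + ∑ i ∈ s', F i w := by
      funext w; rw [Finset.sum_insert hnotmem]
    rw [e, wdbar_add (hF a (Finset.mem_insert_self a s'))
      (DifferentiableAt.fun_sum fun i hi => hF i (Finset.mem_insert_of_mem hi)),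
      ih fun i hi => hF i (Finset.mem_insert_of_mem hi)]

theorem wd_inv (h0 : ∀ w, g w ≠ 0) (hg : DifferentiableAt ℝ g z) :
    wd (fun w => (g w)⁻¹) z = - wd g z / (g z)^2 := by
  have hinv : DifferentiableAt ℝ (fun w => (g w)⁻¹) z := hg.inv (h0 z)
  have e : (fun w => g w * (g w)⁻¹) = fun _ => (1:ℂ) := by
    funext w; exact mul_inv_cancel₀ (h0 w)
  have hz := h0 z
  have h := wd_mul hg hinv
  rw [e, wd_const] at h
  have hc : g z * (g z)⁻¹ = 1 := mul_inv_cancel₀ hz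
  rw [eq_div_iff (pow_ne_zero 2 hz)]
  linear_combination (-(g z)) * h + (-(wd g z)) * hc

theorem wdbar_inv (h0 : ∀ w, g w ≠ 0) (hg : DifferentiableAt ℝ g z) :
    wdbar (fun w => (g w)⁻¹) z = - wdbar g z / (g z)^2 := by
  have hinv : DifferentiableAt ℝ (fun w => (g w)⁻¹) z := hg.inv (h0 z)
  have e : (fun w => g w * (g w)⁻¹) = fun _ => (1:ℂ) := by
    funext w; exact mul_inv_cancel₀ (h0 w)
  have hz := h0 z
  have h := wdbar_mul hg hinv
  rw [e, wdbar_const] at h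
  have hc : g z * (g z)⁻¹ = 1 := mul_inv_cancel₀ hz
  rw [eq_div_iff (pow_ne_zero 2 hz)]
  linear_combination (-(g z)) * h + (-(wdbar g z)) * hc

end scalar


theorem fderiv_real_of_holo {g : ℂ → ℂ} {z : ℂ} (hg : DifferentiableAt ℂ g z) (v : ℂ) :
    fderiv ℝ g z v = deriv g z * v := by
  have h : fderiv ℝ g z = (fderiv ℂ g z).restrictScalars ℝ :=
    (hg.hasFDerivAt.restrictScalars ℝ).fderiv
  rw [h]
  simp only [ContinuousLinearMap.coe_restrictScalars']
  rw [show fderiv ℂ g z v = deriv g z * v by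
    rw [← toSpanSingleton_deriv]; simp [smul_eq_mul, mul_comm]]

theorem wdbar_of_holo {g : ℂ → ℂ} {z : ℂ} (hg : DifferentiableAt ℂ g z) :
    wdbar g z = 0 := by
  simp only [wdbar, fderiv_real_of_holo hg]; ring_nf; simp [Complex.I_sq]

theorem wd_of_holo {g : ℂ → ℂ} {z : ℂ} (hg : DifferentiableAt ℂ g z) :
    wd g z = deriv g z := by
  simp only [wd, fderiv_real_of_holo hg]; ring_nf; simp [Complex.I_sq]; ring_nf


theorem wd_wdbar_comm {g : ℂ → ℂ} (hg : ContDiff ℝ (⊤ : ℕ∞) g) (z : ℂ) :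
    wdbar (fun w => wd g w) z = wd (fun w => wdbar g w) z := by
  have hF : Differentiable ℝ (fderiv ℝ g) :=
    (hg.fderiv_right (m := (⊤ : ℕ∞)) le_rfl).differentiable (zero_lt_one.trans_le one_le_coe_top).ne'
  have hdiffapp : ∀ v : ℂ, DifferentiableAt ℝ (fun w => fderiv ℝ g w v) z := fun v =>
    (hF z).clm_apply (differentiableAt_const v)
  have key : ∀ u : ℂ, fderiv ℝ (fun w => fderiv ℝ g w u) z
      = (fderiv ℝ (fderiv ℝ g) z).flip u := by
    intro u
    rw [fderiv_clm_apply (hF z) (differentiableAt_const u)]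
    simp
  have hsymm : fderiv ℝ (fderiv ℝ g) z 1 Complex.I = fderiv ℝ (fderiv ℝ g) z Complex.I 1 :=
    ((hg.contDiffAt (x := z)).isSymmSndFDerivAt (by rw [minSmoothness_of_isRCLikeNormedField]; exact two_le_coe_top)) 1 Complex.I
  have expand : ∀ (s : ℂ),
      fderiv ℝ (fun w => (fderiv ℝ g w 1 + s * fderiv ℝ g w Complex.I) / 2) z =
      (2 : ℂ)⁻¹ • (fderiv ℝ (fun w => fderiv ℝ g w 1) z
        + s • fderiv ℝ (fun w => fderiv ℝ g w Complex.I) z) := by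
    intro s
    have h1 := hdiffapp 1
    have hI := hdiffapp Complex.I
    have hsI : DifferentiableAt ℝ (fun w => s * fderiv ℝ g w Complex.I) z := hI.const_mul s
    have e1 : (fun w => (fderiv ℝ g w 1 + s * fderiv ℝ g w Complex.I) / 2)
        = (fun w => (2:ℂ)⁻¹ * (fderiv ℝ g w 1 + s * fderiv ℝ g w Complex.I)) := by
      funext w; ring
    rw [e1, fderiv_const_mul (h1.fun_add hsI), fderiv_fun_add h1 hsI, fderiv_const_mul hI]
  have ewd : (fun w => wd g w)
      = (fun w => (fderiv ℝ g w 1 + (-Complex.I) * fderiv ℝ g w Complex.I) / 2) := by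
    funext w; simp only [wd]; ring
  have ewdbar : (fun w => wdbar g w)
      = (fun w => (fderiv ℝ g w 1 + Complex.I * fderiv ℝ g w Complex.I) / 2) := by
    funext w; simp only [wdbar]
  rw [wdbar, wd, ewd, ewdbar, expand (-Complex.I), expand Complex.I]
  simp only [ContinuousLinearMap.smul_apply, ContinuousLinearMap.add_apply, smul_eq_mul,
    key, ContinuousLinearMap.flip_apply]
  rw [show fderiv ℝ (fderiv ℝ g) z Complex.I 1 = fderiv ℝ (fderiv ℝ g) z 1 Complex.I from hsymm.symm]
  ring


theorem CS_fderiv_apply {g : ℂ → ℂ} (hg : CS g) (v : ℂ) :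
    CS (fun z => fderiv ℝ g z v) :=
  (hg.fderiv_right (m := (⊤ : ℕ∞)) le_rfl).clm_apply contDiff_const

theorem CS_wd {g : ℂ → ℂ} (hg : CS g) : CS (fun z => wd g z) := by
  have h1 := CS_fderiv_apply hg 1
  have hI := CS_fderiv_apply hg Complex.I
  exact ((h1.sub (contDiff_const.mul hI)).div_const 2)

theorem CS_wdbar {g : ℂ → ℂ} (hg : CS g) : CS (fun z => wdbar g z) := by
  have h1 := CS_fderiv_apply hg 1
  have hI := CS_fderiv_apply hg Complex.I
  exact ((h1.add (contDiff_const.mul hI)).div_const 2)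

theorem CS_conj {g : ℂ → ℂ} (hg : CS g) : CS (fun z => (starRingEnd ℂ) (g z)) :=
  Complex.conjCLE.toContinuousLinearMap.contDiff.comp hg

theorem CS_of_holo {g : ℂ → ℂ} (hg : Differentiable ℂ g) : CS g :=
  (hg.contDiff (n := ((⊤:ℕ∞) : WithTop ℕ∞))).restrict_scalars ℝ


-- PART3 --
section HM
variable {N : ℕ}

/-- squared norm of fⱼ -/
noncomputable def nf (f : ℂ → Fin N → ℂ) (j : ℕ) (z : ℂ) : ℂ :=
  star (Fseq f j z) ⬝ᵥ Fseq f j z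

/-- cⱼ = fⱼ†∂fⱼ / |fⱼ|² -/
noncomputable def cf (f : ℂ → Fin N → ℂ) (j : ℕ) (z : ℂ) : ℂ :=
  (star (Fseq f j z) ⬝ᵥ wdv (Fseq f j) z) / nf f j z

/-- rⱼ = |fⱼ|²/|f_{j-1}|², with r₀ = 0 -/
noncomputable def rrf (f : ℂ → Fin N → ℂ) : ℕ → ℂ → ℂ
  | 0 => fun _ => 0
  | (j+1) => fun z => nf f (j+1) z / nf f j z

/-- previous vector, FP 0 = 0 -/
noncomputable def FP (f : ℂ → Fin N → ℂ) : ℕ → ℂ → Fin N → ℂ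
  | 0 => fun _ _ => 0
  | (j+1) => Fseq f j

/-- previous c, cP 0 = 0 -/
noncomputable def cP (f : ℂ → Fin N → ℂ) : ℕ → ℂ → ℂ
  | 0 => fun _ => 0
  | (j+1) => cf f j

variable {f : ℂ → Fin N → ℂ} {z : ℂ} {j : ℕ}

open scoped ComplexOrder in
theorem nf_ne (h : Fseq f j z ≠ 0) : nf f j z ≠ 0 := by
  simp only [nf]
  intro hc
  exact h (dotProduct_star_self_eq_zero.mp hc)

theorem nf_real : (starRingEnd ℂ) (nf f j z) = nf f j z := by
  simp only [nf, dotProduct, Pi.star_apply, map_sum, _root_.map_mul,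
    Complex.star_def, Complex.conj_conj]
  exact Finset.sum_congr rfl fun i _ => mul_comm _ _

/-- the defining recursion, entrywise -/
theorem Fseq_succ_apply (i : Fin N) :
    Fseq f (j+1) z i = wd (fun w => Fseq f j w i) z - cf f j z * Fseq f j z i := by
  simp only [Fseq, Pplus, cf, nf, wdv, Pi.sub_apply, Pi.smul_apply, smul_eq_mul]

/-- ∂fⱼ = f_{j+1} + cⱼ fⱼ, entrywise -/
theorem wd_Fseq_apply (i : Fin N) :
    wd (fun w => Fseq f j w i) z = Fseq f (j+1) z i + cf f j z * Fseq f j z i := by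
  rw [Fseq_succ_apply]; ring

/-- ∂fⱼ = f_{j+1} + cⱼ fⱼ, vector form -/
theorem wdv_Fseq : wdv (Fseq f j) z = Fseq f (j+1) z + cf f j z • Fseq f j z := by
  funext i
  exact wd_Fseq_apply i

theorem diffAt_conj {a : ℂ → ℂ} {z : ℂ} (ha : DifferentiableAt ℝ a z) :
    DifferentiableAt ℝ (fun w => (starRingEnd ℂ) (a w)) z :=
  Complex.conjCLE.toContinuousLinearMap.differentiableAt.comp z ha

theorem wd_conj_mul {a b : ℂ → ℂ} {z : ℂ} (ha : DifferentiableAt ℝ a z)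
    (hb : DifferentiableAt ℝ b z) :
    wd (fun w => (starRingEnd ℂ) (a w) * b w) z
      = (starRingEnd ℂ) (wdbar a z) * b z + (starRingEnd ℂ) (a z) * wd b z := by
  rw [wd_mul (diffAt_conj ha) hb, wd_conj]

theorem wdbar_conj_mul {a b : ℂ → ℂ} {z : ℂ} (ha : DifferentiableAt ℝ a z)
    (hb : DifferentiableAt ℝ b z) :
    wdbar (fun w => (starRingEnd ℂ) (a w) * b w) z
      = (starRingEnd ℂ) (wd a z) * b z + (starRingEnd ℂ) (a z) * wdbar b z := by
  rw [wdbar_mul (diffAt_conj ha) hb, wdbar_conj]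

theorem wdbar_real {g : ℂ → ℂ} {z : ℂ} (hg : ∀ w, (starRingEnd ℂ) (g w) = g w) :
    wdbar g z = (starRingEnd ℂ) (wd g z) := by
  have h := wd_conj (g := g) (z := z)
  have e : (fun w => (starRingEnd ℂ) (g w)) = g := funext hg
  rw [e] at h
  have := congrArg (starRingEnd ℂ) h
  simpa using this.symm

section HMdot
variable {N : ℕ} {z : ℂ}

theorem wd_star_dot {u v : ℂ → Fin N → ℂ}
    (hu : ∀ i, DifferentiableAt ℝ (fun w => u w i) z)
    (hv : ∀ i, DifferentiableAt ℝ (fun w => v w i) z) :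
    wd (fun w => star (u w) ⬝ᵥ v w) z
      = star (wdbarv u z) ⬝ᵥ v z + star (u z) ⬝ᵥ wdv v z := by
  have e : (fun w => star (u w) ⬝ᵥ v w)
      = fun w => ∑ i, (starRingEnd ℂ) (u w i) * v w i := by
    funext w; simp [dotProduct, Complex.star_def]
  rw [e, wd_sum Finset.univ _ (fun i _ => (diffAt_conj (hu i)).fun_mul (hv i))]
  simp only [dotProduct, Pi.star_apply, wdbarv, wdv, Complex.star_def]
  rw [← Finset.sum_add_distrib]
  exact Finset.sum_congr rfl fun i _ => wd_conj_mul (hu i) (hv i)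

theorem wdbar_star_dot {u v : ℂ → Fin N → ℂ}
    (hu : ∀ i, DifferentiableAt ℝ (fun w => u w i) z)
    (hv : ∀ i, DifferentiableAt ℝ (fun w => v w i) z) :
    wdbar (fun w => star (u w) ⬝ᵥ v w) z
      = star (wdv u z) ⬝ᵥ v z + star (u z) ⬝ᵥ wdbarv v z := by
  have e : (fun w => star (u w) ⬝ᵥ v w)
      = fun w => ∑ i, (starRingEnd ℂ) (u w i) * v w i := by
    funext w; simp [dotProduct, Complex.star_def]
  rw [e, wdbar_sum Finset.univ _ (fun i _ => (diffAt_conj (hu i)).fun_mul (hv i))]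
  simp only [dotProduct, Pi.star_apply, wdbarv, wdv, Complex.star_def]
  rw [← Finset.sum_add_distrib]
  exact Finset.sum_congr rfl fun i _ => wdbar_conj_mul (hu i) (hv i)

theorem CS_star_dot {u v : ℂ → Fin N → ℂ}
    (hu : ∀ i, CS (fun w => u w i)) (hv : ∀ i, CS (fun w => v w i)) :
    CS (fun w => star (u w) ⬝ᵥ v w) := by
  have e : (fun w => star (u w) ⬝ᵥ v w)
      = fun w => ∑ i, (starRingEnd ℂ) (u w i) * v w i := by
    funext w; simp [dotProduct, Complex.star_def]
  rw [e]
  exact ContDiff.sum fun i _ => (CS_conj (hu i)).mul (hv i)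

variable {f : ℂ → Fin N → ℂ} {j : ℕ}

theorem CS_nf (hs : ∀ i, CS (fun z => Fseq f j z i)) : CS (nf f j) :=
  CS_star_dot hs hs

theorem CS_cf (hs : ∀ i, CS (fun z => Fseq f j z i)) (hn : ∀ z, nf f j z ≠ 0) :
    CS (cf f j) := by
  have e : cf f j = fun z => (star (Fseq f j z) ⬝ᵥ wdv (Fseq f j) z) * (nf f j z)⁻¹ := by
    funext z; simp [cf, div_eq_mul_inv]
  rw [e]
  exact (CS_star_dot hs fun i => CS_wd (hs i)).mul ((CS_nf hs).inv hn)

theorem CS_rrf (hs1 : ∀ i, CS (fun z => Fseq f (j+1) z i))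
    (hs0 : ∀ i, CS (fun z => Fseq f j z i)) (hn : ∀ z, nf f j z ≠ 0) :
    CS (rrf f (j+1)) := by
  have e : rrf f (j+1) = fun z => nf f (j+1) z * (nf f j z)⁻¹ := by
    funext z; simp [rrf, div_eq_mul_inv]
  rw [e]
  exact (CS_nf hs1).mul ((CS_nf hs0).inv hn)

theorem CS_rrf_zero : CS (rrf f 0) := contDiff_const

/-- rⱼ ∂(f_{j-1}) = rⱼ (fⱼ + c_{j-1} f_{j-1}), with the j = 0 case trivial. -/
theorem rr_mul_wd_FP (i : Fin N) :
    rrf f j z * wd (fun w => FP f j w i) z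
      = rrf f j z * (Fseq f j z i + cP f j z * FP f j z i) := by
  cases j with
  | zero => simp [rrf]
  | succ j' =>
    show rrf f (j'+1) z * wd (fun w => Fseq f j' w i) z = _
    rw [wd_Fseq_apply]
    rfl


end HMdot

end HM

section HMind
variable {N : ℕ}

/-- ∂|fⱼ|² = cⱼ |fⱼ|², given ∂̄fⱼ formula and orthogonality. -/
theorem NM_of_DB {f : ℂ → Fin N → ℂ} {j : ℕ}
    (hs : ∀ i, CS (fun z => Fseq f j z i))
    (hDB : ∀ z, wdbarv (Fseq f j) z = (-(rrf f j z)) • FP f j z)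
    (ho1 : ∀ z, star (FP f j z) ⬝ᵥ Fseq f j z = 0)
    (ho2 : ∀ z, star (Fseq f j z) ⬝ᵥ Fseq f (j+1) z = 0) :
    ∀ z, wd (nf f j) z = cf f j z * nf f j z := by
  intro z
  have hwd : wd (nf f j) z
      = star (wdbarv (Fseq f j) z) ⬝ᵥ Fseq f j z
        + star (Fseq f j z) ⬝ᵥ wdv (Fseq f j) z :=
    wd_star_dot (fun i => (hs i).diffAt) (fun i => (hs i).diffAt)
  rw [hwd, hDB z, wdv_Fseq, star_smul, smul_dotProduct, dotProduct_add,
    dotProduct_smul, ho1 z, ho2 z]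
  simp only [smul_zero, zero_add, smul_eq_mul, mul_zero]
  rfl

theorem IH_all {N : ℕ} (m : ℕ) (f : ℂ → Fin N → ℂ)
    (hhol : ∀ i, Differentiable ℂ (fun z => f z i))
    (hnv : ∀ j, j ≤ m + 2 → ∀ z, Fseq f j z ≠ 0)
    (horth : ∀ i j, i ≤ m + 2 → j ≤ m + 2 → i ≠ j →
      ∀ z, star (Fseq f i z) ⬝ᵥ Fseq f j z = 0) :
    ∀ j, j ≤ m + 1 →
      (∀ i, CS (fun z => Fseq f j z i)) ∧
      (∀ i, CS (fun z => FP f j z i)) ∧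
      (∀ z, wdbarv (Fseq f j) z = (-(rrf f j z)) • FP f j z) ∧
      (∀ z, wd (nf f j) z = cf f j z * nf f j z) ∧
      (∀ z, wd (rrf f j) z = rrf f j z * (cf f j z - cP f j z)) := by
  -- orthogonality helpers
  have hoFP1 : ∀ j, j ≤ m + 2 → ∀ z, star (FP f j z) ⬝ᵥ Fseq f j z = 0 := by
    intro j hj z
    cases j with
    | zero => simp [FP, dotProduct]
    | succ j' =>
      exact horth j' (j'+1) (by omega) hj (by omega) z
  have hoFP2 : ∀ j, j ≤ m + 2 → ∀ z, star (Fseq f j z) ⬝ᵥ FP f j z = 0 := by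
    intro j hj z
    cases j with
    | zero => simp [FP, dotProduct]
    | succ j' =>
      exact horth (j'+1) j' hj (by omega) (by omega) z
  intro j
  induction j with
  | zero =>
    intro _
    have hs0 : ∀ i, CS (fun z => Fseq f 0 z i) := fun i => CS_of_holo (hhol i)
    have hDB0 : ∀ z, wdbarv (Fseq f 0) z = (-(rrf f 0 z)) • FP f 0 z := by
      intro z
      funext i
      show wdbar (fun w => f w i) z = _
      rw [wdbar_of_holo ((hhol i) z)]
      simp [rrf, FP]
    refine ⟨hs0, fun i => contDiff_const, hDB0, ?_, ?_⟩
    · exact NM_of_DB hs0 hDB0 (hoFP1 0 (by omega)) (fun z => horth 0 1 (by omega) (by omega) (by omega) z)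
    · intro z
      show wd (fun _ => (0:ℂ)) z = _
      rw [wd_const]
      simp [rrf]
  | succ j ihj =>
    intro hj1
    obtain ⟨hS, hSP, hDB, hNM, hDR⟩ := ihj (by omega)
    have hnj : ∀ z, nf f j z ≠ 0 := fun z => nf_ne (hnv j (by omega) z)
    have hnj1 : ∀ z, nf f (j+1) z ≠ 0 := fun z => nf_ne (hnv (j+1) (by omega) z)
    have hcf : CS (cf f j) := CS_cf hS hnj
    have hrr : CS (rrf f j) := by
      cases j with
      | zero => exact CS_rrf_zero
      | succ j' =>
        exact CS_rrf hS hSP (fun z => nf_ne (hnv j' (by omega) z))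
    -- smoothness of F_{j+1}
    have hS1 : ∀ i, CS (fun z => Fseq f (j+1) z i) := by
      intro i
      have e : (fun z => Fseq f (j+1) z i)
          = fun z => wd (fun w => Fseq f j w i) z - cf f j z * Fseq f j z i :=
        funext fun z => Fseq_succ_apply i
      rw [e]
      exact (CS_wd (hS i)).sub (hcf.mul (hS i))
    -- ∂∂̄ fⱼ
    have hddbar : ∀ z i, wd (fun w => wdbar (fun w' => Fseq f j w' i) w) z
        = -(rrf f j z * (cf f j z - cP f j z)) * FP f j z i
          - rrf f j z * (Fseq f j z i + cP f j z * FP f j z i) := by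
      intro z i
      have e : (fun w => wdbar (fun w' => Fseq f j w' i) w)
          = fun w => -(rrf f j w) * FP f j w i := by
        funext w
        have := congrFun (hDB w) i
        simpa [wdbarv, Pi.smul_apply, smul_eq_mul] using this
      rw [e]
      have e2 : (fun w => -(rrf f j w) * FP f j w i)
          = fun w => -(rrf f j w * FP f j w i) := by funext w; ring
      rw [e2, wd_neg, wd_mul hrr.diffAt (hSP i).diffAt, hDR z]
      have := rr_mul_wd_FP (f := f) (j := j) (z := z) i
      linear_combination -this
    -- ∂̄ cⱼ = r_{j+1} - rⱼ
    have hDBC : ∀ z, wdbar (cf f j) z = rrf f (j+1) z - rrf f j z := by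
      intro z
      have hd : CS (fun z => star (Fseq f j z) ⬝ᵥ wdv (Fseq f j) z) :=
        CS_star_dot hS fun i => CS_wd (hS i)
      have ecf : cf f j = fun w => (star (Fseq f j w) ⬝ᵥ wdv (Fseq f j) w) * (nf f j w)⁻¹ := by
        funext w; simp [cf, div_eq_mul_inv]
      rw [ecf, wdbar_mul (h := fun w => (nf f j w)⁻¹) hd.diffAt (((CS_nf hS).inv hnj).diffAt),
        wdbar_inv hnj (CS_nf hS).diffAt]
      -- ∂̄ nⱼ
      have hbn : wdbar (nf f j) z = (starRingEnd ℂ) (cf f j z) * nf f j z := by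
        rw [wdbar_real (fun w => nf_real), hNM z, _root_.map_mul, nf_real]
      -- ∂̄ d
      have hbd : wdbar (fun w => star (Fseq f j w) ⬝ᵥ wdv (Fseq f j) w) z
          = nf f (j+1) z
            + (starRingEnd ℂ) (cf f j z) * cf f j z * nf f j z
            - rrf f j z * nf f j z := by
        rw [wdbar_star_dot (u := Fseq f j) (v := fun w => wdv (Fseq f j) w)
          (fun i => (hS i).diffAt) (fun i => (CS_wd (hS i)).diffAt)]
        -- first term
        have t1 : star (wdv (Fseq f j) z) ⬝ᵥ wdv (Fseq f j) z
            = nf f (j+1) z + (starRingEnd ℂ) (cf f j z) * cf f j z * nf f j z := by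
          rw [wdv_Fseq, star_add, star_smul, add_dotProduct, dotProduct_add,
            dotProduct_add, smul_dotProduct, smul_dotProduct,
            dotProduct_smul, dotProduct_smul,
            horth (j+1) j (by omega) (by omega) (by omega) z,
            horth j (j+1) (by omega) (by omega) (by omega) z]
          simp only [smul_eq_mul, mul_zero, add_zero, zero_add, smul_zero]
          show nf f (j+1) z + (starRingEnd ℂ) (cf f j z) * ((cf f j z) * nf f j z) = _
          ring
        -- second term
        have t2 : star (Fseq f j z) ⬝ᵥ wdbarv (wdv (Fseq f j)) z = - (rrf f j z * nf f j z) := by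
          have e3 : wdbarv (wdv (Fseq f j)) z = fun i =>
              -(rrf f j z * (cf f j z - cP f j z)) * FP f j z i
                - rrf f j z * (Fseq f j z i + cP f j z * FP f j z i) := by
            funext i
            show wdbar (fun w => wdv (Fseq f j) w i) z = _
            have e4 : (fun w => wdv (Fseq f j) w i) = fun w => wd (fun w' => Fseq f j w' i) w := rfl
            rw [e4, wd_wdbar_comm (hS i) z]
            exact hddbar z i
          rw [e3]
          simp only [dotProduct, Pi.star_apply]
          have expand : ∀ i, star (Fseq f j z i) * (-(rrf f j z * (cf f j z - cP f j z)) * FP f j z i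
                - rrf f j z * (Fseq f j z i + cP f j z * FP f j z i))
              = (-(rrf f j z * (cf f j z - cP f j z)) - rrf f j z * cP f j z) * (star (Fseq f j z i) * FP f j z i)
                - rrf f j z * (star (Fseq f j z i) * Fseq f j z i) := by
            intro i; ring
          rw [Finset.sum_congr rfl fun i _ => expand i, Finset.sum_sub_distrib, ← Finset.mul_sum, ← Finset.mul_sum]
          have h1 : ∑ i, star (Fseq f j z i) * FP f j z i = 0 := hoFP2 j (by omega) z
          have h2 : ∑ i, star (Fseq f j z i) * Fseq f j z i = nf f j z := rfl
          rw [h1, h2]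
          ring
        rw [t1, t2]
        ring
      rw [hbd, hbn]
      have hrrj1 : rrf f (j+1) z = nf f (j+1) z / nf f j z := rfl
      have hd_eq : star (Fseq f j z) ⬝ᵥ wdv (Fseq f j) z = cf f j z * nf f j z := by
        show _ = (star (Fseq f j z) ⬝ᵥ wdv (Fseq f j) z) / nf f j z * nf f j z
        rw [div_mul_cancel₀ _ (hnj z)]
      rw [hd_eq, hrrj1]
      have hinv : nf f j z * (nf f j z)⁻¹ = 1 := mul_inv_cancel₀ (hnj z)
      linear_combination (-((starRingEnd ℂ) (cf f j z) * cf f j z * nf f j z * (nf f j z)⁻¹)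
        - rrf f j z) * hinv
    -- ∂̄ f_{j+1} = -r_{j+1} fⱼ
    have hDB1 : ∀ z, wdbarv (Fseq f (j+1)) z = (-(rrf f (j+1) z)) • FP f (j+1) z := by
      intro z
      funext i
      show wdbar (fun w => Fseq f (j+1) w i) z = _
      have e : (fun w => Fseq f (j+1) w i)
          = fun w => wd (fun w' => Fseq f j w' i) w - cf f j w * Fseq f j w i :=
        funext fun w => Fseq_succ_apply i
      rw [e, wdbar_sub (CS_wd (hS i)).diffAt (hcf.mul (hS i)).diffAt,
        wdbar_mul hcf.diffAt (hS i).diffAt,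
        wd_wdbar_comm (hS i) z, hddbar z i, hDBC z]
      have hDBi : wdbar (fun w => Fseq f j w i) z = -(rrf f j z) * FP f j z i := by
        have := congrFun (hDB z) i
        simpa [wdbarv, Pi.smul_apply, smul_eq_mul] using this
      rw [hDBi]
      show _ = -(rrf f (j+1) z) * Fseq f j z i
      ring
    -- ∂ n_{j+1} = c_{j+1} n_{j+1}
    have hNM1 : ∀ z, wd (nf f (j+1)) z = cf f (j+1) z * nf f (j+1) z :=
      NM_of_DB hS1 hDB1 (hoFP1 (j+1) (by omega))
        (fun z => horth (j+1) (j+2) (by omega) (by omega) (by omega) z)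
    -- ∂ r_{j+1} = r_{j+1}(c_{j+1} - cⱼ)
    have hDR1 : ∀ z, wd (rrf f (j+1)) z = rrf f (j+1) z * (cf f (j+1) z - cP f (j+1) z) := by
      intro z
      have e : rrf f (j+1) = fun w => nf f (j+1) w * (nf f j w)⁻¹ := by
        funext w; simp [rrf, div_eq_mul_inv]
      rw [e, wd_mul (h := fun w => (nf f j w)⁻¹) (CS_nf hS1).diffAt ((CS_nf hS).inv hnj).diffAt,
        wd_inv hnj (CS_nf hS).diffAt, hNM1 z, hNM z]
      show _ = nf f (j+1) z / nf f j z * (cf f (j+1) z - cf f j z)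
      have hinv : nf f j z * (nf f j z)⁻¹ = 1 := mul_inv_cancel₀ (hnj z)
      linear_combination (-(cf f j z * nf f (j+1) z * (nf f j z)⁻¹)) * hinv
    exact ⟨hS1, hS, hDB1, hNM1, hDR1⟩

end HMind

/-- inductive step, with k = m + 2: if
∂(∑_{j=0}^{k−2} Pⱼ) = (f_{k−1} ⊗ f_{k−2}†)/|f_{k−2}|², then
∂(∑_{j=0}^{k−1} Pⱼ) = (f_k ⊗ f_{k−1}†)/|f_{k−1}|², where fⱼ = P₊ʲ f and
Pⱼ = (fⱼ ⊗ fⱼ†)/|fⱼ|². -/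
theorem stmt_13 {N : ℕ} (m : ℕ) (f : ℂ → Fin N → ℂ)
    (hhol : ∀ i, Differentiable ℂ (fun z => f z i))
    (hnv : ∀ j, j ≤ m + 2 → ∀ z, Fseq f j z ≠ 0)
    (horth : ∀ i j, i ≤ m + 2 → j ≤ m + 2 → i ≠ j →
      ∀ z, star (Fseq f i z) ⬝ᵥ Fseq f j z = 0)
    (ξ : ℂ)
    (ih : wdm (fun z => ∑ j ∈ Finset.range (m + 1), proj (Fseq f j z)) ξ =
      (star (Fseq f m ξ) ⬝ᵥ Fseq f m ξ)⁻¹ •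
        Matrix.vecMulVec (Fseq f (m + 1) ξ) (star (Fseq f m ξ))) :
    wdm (fun z => ∑ j ∈ Finset.range (m + 2), proj (Fseq f j z)) ξ =
      (star (Fseq f (m + 1) ξ) ⬝ᵥ Fseq f (m + 1) ξ)⁻¹ •
        Matrix.vecMulVec (Fseq f (m + 2) ξ) (star (Fseq f (m + 1) ξ)) := by
  classical
  have key := IH_all m f hhol hnv horth
  obtain ⟨hSm1, hSPm1, hDBm1, hNMm1, -⟩ := key (m+1) le_rfl
  obtain ⟨hSm, -, -, hNMm, -⟩ := key m (by omega)
  have hnm : ∀ z, nf f m z ≠ 0 := fun z => nf_ne (hnv m (by omega) z)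
  have hnm1 : ∀ z, nf f (m+1) z ≠ 0 := fun z => nf_ne (hnv (m+1) (by omega) z)
  -- entrywise projector formula
  have hproj_entry : ∀ (j : ℕ) (w : ℂ) (i k : Fin N),
      proj (Fseq f j w) i k
        = (nf f j w)⁻¹ * (Fseq f j w i * (starRingEnd ℂ) (Fseq f j w k)) := by
    intro j w i k
    simp [proj, Matrix.smul_apply, Matrix.vecMulVec_apply, nf, Complex.star_def,
      smul_eq_mul]
  have hCS_proj : ∀ j, j ≤ m + 1 → ∀ i k : Fin N,
      CS (fun w => proj (Fseq f j w) i k) := by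
    intro j hj i k
    have hSj := (key j hj).1
    have e : (fun w => proj (Fseq f j w) i k)
        = fun w => (nf f j w)⁻¹ * (Fseq f j w i * (starRingEnd ℂ) (Fseq f j w k)) :=
      funext fun w => hproj_entry j w i k
    rw [e]
    exact ((CS_nf hSj).inv (fun z => nf_ne (hnv j (by omega) z))).mul
      ((hSj i).mul (CS_conj (hSj k)))
  ext i k
  show wd (fun w => (∑ j ∈ Finset.range (m + 2), proj (Fseq f j w)) i k) ξ = _
  have esum : ∀ (K : ℕ), (fun w => (∑ j ∈ Finset.range K, proj (Fseq f j w)) i k)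
      = fun w => ∑ j ∈ Finset.range K, proj (Fseq f j w) i k := by
    intro K; funext w; simp [Matrix.sum_apply]
  have esplit : (fun w => ∑ j ∈ Finset.range (m + 2), proj (Fseq f j w) i k)
      = fun w => (∑ j ∈ Finset.range (m + 1), proj (Fseq f j w) i k)
          + proj (Fseq f (m+1) w) i k := by
    funext w; rw [Finset.sum_range_succ]
  rw [esum, esplit, wd_add
    (DifferentiableAt.fun_sum fun j hj =>
      (hCS_proj j (by simp at hj; omega) i k).diffAt)
    ((hCS_proj (m+1) le_rfl i k).diffAt)]
  -- the inductive-hypothesis part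
  have hsum : wd (fun w => ∑ j ∈ Finset.range (m + 1), proj (Fseq f j w) i k) ξ
      = (nf f m ξ)⁻¹ * (Fseq f (m+1) ξ i * (starRingEnd ℂ) (Fseq f m ξ k)) := by
    have h := congrFun (congrFun ih i) k
    have hL : wdm (fun z => ∑ j ∈ Finset.range (m + 1), proj (Fseq f j z)) ξ i k
        = wd (fun w => (∑ j ∈ Finset.range (m + 1), proj (Fseq f j w)) i k) ξ := rfl
    rw [hL, esum] at h
    rw [h]
    show ((star (Fseq f m ξ) ⬝ᵥ Fseq f m ξ)⁻¹ • Matrix.vecMulVec (Fseq f (m + 1) ξ)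
      (star (Fseq f m ξ))) i k = _
    simp [Matrix.smul_apply, Matrix.vecMulVec_apply, nf, Complex.star_def, smul_eq_mul]
  -- the new projector's derivative
  have hlast : wd (fun w => proj (Fseq f (m+1) w) i k) ξ
      = (nf f (m+1) ξ)⁻¹ * (Fseq f (m+2) ξ i * (starRingEnd ℂ) (Fseq f (m+1) ξ k))
        - (nf f m ξ)⁻¹ * (Fseq f (m+1) ξ i * (starRingEnd ℂ) (Fseq f m ξ k)) := by
    have e : (fun w => proj (Fseq f (m+1) w) i k)
        = fun w => (nf f (m+1) w)⁻¹
            * (Fseq f (m+1) w i * (starRingEnd ℂ) (Fseq f (m+1) w k)) :=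
      funext fun w => hproj_entry (m+1) w i k
    rw [e, wd_mul (g := fun w => (nf f (m+1) w)⁻¹) ((CS_nf hSm1).inv hnm1).diffAt
      ((hSm1 i).mul (CS_conj (hSm1 k))).diffAt,
      wd_inv hnm1 (CS_nf hSm1).diffAt, hNMm1 ξ,
      wd_mul (hSm1 i).diffAt (diffAt_conj (hSm1 k).diffAt),
      wd_conj, wd_Fseq_apply]
    have hDBk : wdbar (fun w => Fseq f (m+1) w k) ξ = -(rrf f (m+1) ξ) * Fseq f m ξ k := by
      have := congrFun (hDBm1 ξ) k
      simpa [wdbarv, Pi.smul_apply, smul_eq_mul, FP] using this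
    rw [hDBk]
    have hrr_real : (starRingEnd ℂ) (rrf f (m+1) ξ) = rrf f (m+1) ξ := by
      show (starRingEnd ℂ) (nf f (m+1) ξ / nf f m ξ) = nf f (m+1) ξ / nf f m ξ
      rw [map_div₀, nf_real, nf_real]
    rw [_root_.map_mul, map_neg, hrr_real]
    have hrrdef : rrf f (m+1) ξ = nf f (m+1) ξ / nf f m ξ := rfl
    rw [hrrdef]
    have hinv1 : nf f (m+1) ξ * (nf f (m+1) ξ)⁻¹ = 1 := mul_inv_cancel₀ (hnm1 ξ)
    have hinv0 : nf f m ξ * (nf f m ξ)⁻¹ = 1 := mul_inv_cancel₀ (hnm ξ)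
    linear_combination (-(cf f (m+1) ξ * Fseq f (m+1) ξ i
        * (starRingEnd ℂ) (Fseq f (m+1) ξ k) * (nf f (m+1) ξ)⁻¹)
      - (nf f m ξ)⁻¹ * Fseq f (m+1) ξ i * (starRingEnd ℂ) (Fseq f m ξ k)) * hinv1
  rw [hsum, hlast]
  show _ = ((star (Fseq f (m+1) ξ) ⬝ᵥ Fseq f (m+1) ξ)⁻¹ • Matrix.vecMulVec (Fseq f (m + 2) ξ)
    (star (Fseq f (m+1) ξ))) i k
  simp only [Matrix.smul_apply, Matrix.vecMulVec_apply, Pi.star_apply, Complex.star_def,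
    smul_eq_mul]
  show (nf f m ξ)⁻¹ * _ + _ = (nf f (m+1) ξ)⁻¹ * _
  ring
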